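/- Let k ≥ 1 be an integer and let ξ1, ξ2, ξ3, ξ4 be real numbers with ξ1 + ξ2 + ξ3 + ξ4 = 0. Then Σ_{i+j=2k−1} (−1)^i ( ξ3^i ξ1^j − ξ4^i ξ2^j ) = (ξ1+ξ4) · [ Σ_{i+j=2k−2} (−1)^i ( ξ1^i ξ4^j + ξ2^i ξ3^j ) + Σ_{i+j=2k−1, i≥1, j≥1} ( (−ξ3)^i Σ_{m+l=j−1} ξ1^m (−ξ4)^l + ξ4^j Σ_{m+l=i−1} (−ξ2)^m ξ3^l ) ]. -/

import Mathlib

open Finset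

lemma geom_aux (x y : ℝ) (n : ℕ) :
    (x - y) * ∑ p ∈ antidiagonal n, x ^ p.1 * y ^ p.2 = x ^ (n+1) - y ^ (n+1) := by
  rw [Finset.Nat.sum_antidiagonal_eq_sum_range_succ_mk, mul_comm]
  simpa using geom_sum₂_mul x y (n+1)

lemma split_aux (n : ℕ) (hn : 1 ≤ n) (f : ℕ × ℕ → ℝ) :
    ∑ p ∈ antidiagonal n, f p
      = f (0, n) + f (n, 0) + ∑ p ∈ (antidiagonal n).filter (fun p => 1 ≤ p.1 ∧ 1 ≤ p.2), f p := by
  rw [← Finset.sum_filter_add_sum_filter_not (antidiagonal n) (fun p => 1 ≤ p.1 ∧ 1 ≤ p.2)]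
  have hset : (antidiagonal n).filter (fun p => ¬(1 ≤ p.1 ∧ 1 ≤ p.2)) = {(0, n), (n, 0)} := by
    ext ⟨i, j⟩
    simp only [Finset.mem_filter, Finset.HasAntidiagonal.mem_antidiagonal, Finset.mem_insert,
      Finset.mem_singleton, Prod.mk.injEq, not_and, not_le]
    omega
  rw [hset, Finset.sum_insert (by simp [Prod.ext_iff]; omega), Finset.sum_singleton]
  ring

lemma swap_aux (n : ℕ) (f : ℕ × ℕ → ℝ) :
    ∑ p ∈ (antidiagonal n).filter (fun p => 1 ≤ p.1 ∧ 1 ≤ p.2), f p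
      = ∑ p ∈ (antidiagonal n).filter (fun p => 1 ≤ p.1 ∧ 1 ≤ p.2), f p.swap := by
  apply Finset.sum_nbij' (fun p => p.swap) (fun p => p.swap)
  · intro p hp
    simp only [Finset.mem_filter, Finset.HasAntidiagonal.mem_antidiagonal] at *
    simp [Prod.swap]; omega
  · intro p hp
    simp only [Finset.mem_filter, Finset.HasAntidiagonal.mem_antidiagonal] at *
    simp [Prod.swap]; omega
  · intro p _; simp
  · intro p _; simp
  · intro p _; rfl

lemma main_aux (n : ℕ) (hn : 1 ≤ n) (hodd : Odd n) (ξ1 ξ2 ξ3 ξ4 : ℝ)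
    (h : ξ1 + ξ2 + ξ3 + ξ4 = 0) :
    ∑ p ∈ antidiagonal n,
        (-1 : ℝ) ^ p.1 * (ξ3 ^ p.1 * ξ1 ^ p.2 - ξ4 ^ p.1 * ξ2 ^ p.2)
    = (ξ1 + ξ4) *
      ( ∑ p ∈ antidiagonal (n - 1),
          (-1 : ℝ) ^ p.1 * (ξ1 ^ p.1 * ξ4 ^ p.2 + ξ2 ^ p.1 * ξ3 ^ p.2)
      + ∑ p ∈ (antidiagonal n).filter (fun p => 1 ≤ p.1 ∧ 1 ≤ p.2),
          ( (-ξ3) ^ p.1 * ∑ q ∈ antidiagonal (p.2 - 1), ξ1 ^ q.1 * (-ξ4) ^ q.2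
          + ξ4 ^ p.2 * ∑ q ∈ antidiagonal (p.1 - 1), (-ξ2) ^ q.1 * ξ3 ^ q.2 ) ) := by
  have hno : n % 2 = 1 := Nat.odd_iff.mp hodd
  have hn1 : n - 1 + 1 = n := by omega
  have L : ∑ p ∈ antidiagonal n,
        (-1 : ℝ) ^ p.1 * (ξ3 ^ p.1 * ξ1 ^ p.2 - ξ4 ^ p.1 * ξ2 ^ p.2)
      = (∑ p ∈ antidiagonal n, (-ξ3) ^ p.1 * ξ1 ^ p.2)
        - ∑ p ∈ antidiagonal n, (-ξ4) ^ p.1 * ξ2 ^ p.2 := by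
    rw [← Finset.sum_sub_distrib]
    exact Finset.sum_congr rfl fun p _ => by rw [neg_pow, neg_pow]; ring
  have C : ∑ p ∈ antidiagonal (n - 1),
        (-1 : ℝ) ^ p.1 * (ξ1 ^ p.1 * ξ4 ^ p.2 + ξ2 ^ p.1 * ξ3 ^ p.2)
      = (∑ p ∈ antidiagonal (n - 1), (-ξ1) ^ p.1 * ξ4 ^ p.2)
        + ∑ p ∈ antidiagonal (n - 1), (-ξ2) ^ p.1 * ξ3 ^ p.2 := by
    rw [← Finset.sum_add_distrib]
    exact Finset.sum_congr rfl fun p _ => by rw [neg_pow, neg_pow]; ring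
  have key1 : (ξ1 + ξ4) * ∑ p ∈ antidiagonal (n - 1), (-ξ1) ^ p.1 * ξ4 ^ p.2
      = ξ1 ^ n + ξ4 ^ n := by
    have g := geom_aux (-ξ1) ξ4 (n - 1)
    rw [hn1, hodd.neg_pow] at g
    linear_combination -g
  have key2 : (ξ1 + ξ4) * ∑ p ∈ antidiagonal (n - 1), (-ξ2) ^ p.1 * ξ3 ^ p.2
      = -ξ2 ^ n - ξ3 ^ n := by
    have g := geom_aux (-ξ2) ξ3 (n - 1)
    rw [hn1, hodd.neg_pow] at g
    linear_combination g + (∑ p ∈ antidiagonal (n - 1), (-ξ2) ^ p.1 * ξ3 ^ p.2) * h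
  have key3 : (ξ1 + ξ4) * ∑ p ∈ (antidiagonal n).filter (fun p => 1 ≤ p.1 ∧ 1 ≤ p.2),
          ( (-ξ3) ^ p.1 * ∑ q ∈ antidiagonal (p.2 - 1), ξ1 ^ q.1 * (-ξ4) ^ q.2
          + ξ4 ^ p.2 * ∑ q ∈ antidiagonal (p.1 - 1), (-ξ2) ^ q.1 * ξ3 ^ q.2 )
      = ∑ p ∈ (antidiagonal n).filter (fun p => 1 ≤ p.1 ∧ 1 ≤ p.2),
          ((-ξ3) ^ p.1 * ξ1 ^ p.2 + (-ξ2) ^ p.1 * ξ4 ^ p.2) := by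
    rw [Finset.mul_sum]
    refine Finset.sum_congr rfl fun p hp => ?_
    simp only [Finset.mem_filter, Finset.HasAntidiagonal.mem_antidiagonal] at hp
    obtain ⟨hpn, hp1, hp2⟩ := hp
    have g1 := geom_aux ξ1 (-ξ4) (p.2 - 1)
    rw [show p.2 - 1 + 1 = p.2 by omega] at g1
    have g2 := geom_aux (-ξ2) ξ3 (p.1 - 1)
    rw [show p.1 - 1 + 1 = p.1 by omega] at g2
    have e1 : (-ξ3) ^ p.1 * (-ξ4) ^ p.2 = -(ξ3 ^ p.1 * ξ4 ^ p.2) := by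
      rcases Nat.even_or_odd p.1 with h1 | h1
      · have h2 : Odd p.2 := Nat.odd_iff.mpr (by have := Nat.even_iff.mp h1; omega)
        rw [h1.neg_pow, h2.neg_pow]; ring
      · have h2 : Even p.2 := Nat.even_iff.mpr (by have := Nat.odd_iff.mp h1; omega)
        rw [h1.neg_pow, h2.neg_pow]; ring
    linear_combination ((-ξ3) ^ p.1) * g1 + (ξ4 ^ p.2) * g2
      + (ξ4 ^ p.2 * ∑ q ∈ antidiagonal (p.1 - 1), (-ξ2) ^ q.1 * ξ3 ^ q.2) * h - e1
  have key5 : ∑ p ∈ (antidiagonal n).filter (fun p => 1 ≤ p.1 ∧ 1 ≤ p.2),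
        (-ξ2) ^ p.1 * ξ4 ^ p.2
      = - ∑ p ∈ (antidiagonal n).filter (fun p => 1 ≤ p.1 ∧ 1 ≤ p.2),
        (-ξ4) ^ p.1 * ξ2 ^ p.2 := by
    rw [swap_aux n (fun p => (-ξ2) ^ p.1 * ξ4 ^ p.2), ← Finset.sum_neg_distrib]
    refine Finset.sum_congr rfl fun p hp => ?_
    simp only [Finset.mem_filter, Finset.HasAntidiagonal.mem_antidiagonal] at hp
    obtain ⟨hpn, -, -⟩ := hp
    show (-ξ2) ^ p.2 * ξ4 ^ p.1 = -((-ξ4) ^ p.1 * ξ2 ^ p.2)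
    rcases Nat.even_or_odd p.1 with h1 | h1
    · have h2 : Odd p.2 := Nat.odd_iff.mpr (by have := Nat.even_iff.mp h1; omega)
      rw [h1.neg_pow, h2.neg_pow]; ring
    · have h2 : Even p.2 := Nat.even_iff.mpr (by have := Nat.odd_iff.mp h1; omega)
      rw [h1.neg_pow, h2.neg_pow]; ring
  have S1 := split_aux n hn (fun p => (-ξ3) ^ p.1 * ξ1 ^ p.2)
  have S2 := split_aux n hn (fun p => (-ξ4) ^ p.1 * ξ2 ^ p.2)
  simp only [pow_zero, one_mul, mul_one, hodd.neg_pow] at S1 S2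
  rw [L, C, mul_add, mul_add, key1, key2, key3, S1, S2, Finset.sum_add_distrib, key5]
  ring

/-- Identity (3.50): for `k ≥ 1` and reals with `ξ1 + ξ2 + ξ3 + ξ4 = 0`,
`Σ_{i+j=2k−1} (−1)^i (ξ3^i ξ1^j − ξ4^i ξ2^j)` factors as `(ξ1+ξ4)` times the
explicit expression of (3.50). -/
theorem sum_factorization_3_50 (k : ℕ) (hk : 1 ≤ k) (ξ1 ξ2 ξ3 ξ4 : ℝ)
    (h : ξ1 + ξ2 + ξ3 + ξ4 = 0) :
    ∑ p ∈ antidiagonal (2 * k - 1),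
        (-1 : ℝ) ^ p.1 * (ξ3 ^ p.1 * ξ1 ^ p.2 - ξ4 ^ p.1 * ξ2 ^ p.2)
    = (ξ1 + ξ4) *
      ( ∑ p ∈ antidiagonal (2 * k - 2),
          (-1 : ℝ) ^ p.1 * (ξ1 ^ p.1 * ξ4 ^ p.2 + ξ2 ^ p.1 * ξ3 ^ p.2)
      + ∑ p ∈ (antidiagonal (2 * k - 1)).filter (fun p => 1 ≤ p.1 ∧ 1 ≤ p.2),
          ( (-ξ3) ^ p.1 * ∑ q ∈ antidiagonal (p.2 - 1), ξ1 ^ q.1 * (-ξ4) ^ q.2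
          + ξ4 ^ p.2 * ∑ q ∈ antidiagonal (p.1 - 1), (-ξ2) ^ q.1 * ξ3 ^ q.2 ) ) := by
  have h1 : 2 * k - 2 = 2 * k - 1 - 1 := by omega
  rw [h1]
  exact main_aux (2 * k - 1) (by omega) ⟨k - 1, by omega⟩ ξ1 ξ2 ξ3 ξ4 h
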